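/- Let X be locally compact Hausdorff second countable, U ⊆ X open, σ : U → X a local homeomorphism with σ finite-to-one on fibers appearing in compactly supported sums, F : U → ℝ continuous, β > 0, and μ a finite Borel measure on X. If μ is an eigenmeasure of the Ruelle transformation, i.e., ∫_X ∑_{σ(y)=x} e^{−βF(y)} f(y) dμ(x) = ∫_U f dμ for all f ∈ C_c(U), then μ is Denker–Urbański conformal: μ(σ(A)) = ∫_A e^{βF} dμ for every Borel set A ⊆ U on which σ is injective. -/

import Mathlib

section Aux

open MeasureTheory Set
open scoped NNReal ENNReal

variable {X : Type*} [TopologicalSpace X] [LocallyCompactSpace X] [T2Space X]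
    [SecondCountableTopology X] [MeasurableSpace X] [BorelSpace X]

lemma aux_urysohn {K W : Set X} (hK : IsCompact K) (hW : IsOpen W) (hKW : K ⊆ W) :
    ∃ f : C(X, ℝ), EqOn f 1 K ∧ tsupport f ⊆ W ∧ HasCompactSupport f ∧
      ∀ x, f x ∈ Icc (0 : ℝ) 1 := by
  obtain ⟨k, hk, hKk, hkW⟩ := exists_compact_between hK hW hKW
  obtain ⟨f, hf1, hf0, hfc, hf01⟩ := exists_continuous_one_zero_of_isCompact hK
    (isOpen_interior (s := k)).isClosed_compl
    (disjoint_compl_right_iff_subset.mpr hKk)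
  refine ⟨f, hf1, ?_, hfc, hf01⟩
  have hsupp : Function.support f ⊆ interior k := by
    intro x hx
    by_contra h
    exact hx (hf0 h)
  calc tsupport f ⊆ closure (interior k) := closure_mono hsupp
    _ ⊆ k := closure_minimal interior_subset hk.isClosed
    _ ⊆ W := hkW

lemma aux_compact_le {ρ κ : Measure X} [IsFiniteMeasure ρ] [IsFiniteMeasure κ]
    {V : Set X} (hV : IsOpen V)
    (h : ∀ f : X → ℝ, Continuous f → HasCompactSupport f → tsupport f ⊆ V →
      ∫ x, f x ∂ρ = ∫ x, f x ∂κ)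
    {K : Set X} (hK : IsCompact K) (hKV : K ⊆ V) : ρ K ≤ κ K := by
  refine ENNReal.le_of_forall_pos_le_add fun ε hε _ ↦ ?_
  have hlt : κ K < κ K + ε := ENNReal.lt_add_right (measure_ne_top _ _) (by exact_mod_cast hε.ne')
  obtain ⟨W, hKW, hWopen, hWlt⟩ := K.exists_isOpen_lt_of_lt _ hlt
  obtain ⟨f, hf1, hfsupp, hfc, hf01⟩ := aux_urysohn hK (hWopen.inter hV)
    (subset_inter hKW hKV)
  have hfint_ρ : Integrable f ρ := f.continuous.integrable_of_hasCompactSupport hfc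
  have hfint_κ : Integrable f κ := f.continuous.integrable_of_hasCompactSupport hfc
  have h1 : (ρ K).toReal ≤ ∫ x, f x ∂ρ := by
    have : (ρ K).toReal = ∫ x, K.indicator (fun _ ↦ (1:ℝ)) x ∂ρ := by
      rw [integral_indicator hK.measurableSet]
      simp
      rfl
    rw [this]
    refine integral_mono ((integrable_const (1:ℝ)).indicator hK.measurableSet) hfint_ρ ?_
    intro x
    by_cases hx : x ∈ K
    · simp [hx, hf1 hx]
    · simp only [indicator_of_notMem hx]
      exact (hf01 x).1
  have h2 : ∫ x, f x ∂κ ≤ (κ (W ∩ V)).toReal := by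
    have : ((κ (W ∩ V)).toReal : ℝ) = ∫ x, (W ∩ V).indicator (fun _ ↦ (1:ℝ)) x ∂κ := by
      rw [integral_indicator (hWopen.inter hV).measurableSet]
      simp
      rfl
    rw [this]
    refine integral_mono hfint_κ ((integrable_const (1:ℝ)).indicator
      (hWopen.inter hV).measurableSet) ?_
    intro x
    by_cases hx : x ∈ W ∩ V
    · simp only [indicator_of_mem hx]
      exact (hf01 x).2
    · simp only [indicator_of_notMem hx]
      have : x ∉ tsupport f := fun hc ↦ hx (hfsupp hc)
      rw [image_eq_zero_of_notMem_tsupport this]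
  have : (ρ K).toReal ≤ (κ W).toReal := by
    refine (h1.trans ((h f f.continuous hfc (hfsupp.trans inter_subset_right)) ▸ h2)).trans ?_
    exact ENNReal.toReal_mono (measure_ne_top _ _) (measure_mono inter_subset_left)
  have := (ENNReal.toReal_le_toReal (measure_ne_top _ _) (measure_ne_top _ _)).mp this
  exact this.trans hWlt.le

lemma aux_measure_ext {ρ κ : Measure X} [IsFiniteMeasure ρ] [IsFiniteMeasure κ]
    {V : Set X} (hV : IsOpen V) (hρ : ρ Vᶜ = 0) (hκ : κ Vᶜ = 0)
    (h : ∀ f : X → ℝ, Continuous f → HasCompactSupport f → tsupport f ⊆ V →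
      ∫ x, f x ∂ρ = ∫ x, f x ∂κ) : ρ = κ := by
  have key : ∀ K : Set X, IsCompact K → K ⊆ V → ρ K = κ K := fun K hK hKV ↦
    le_antisymm (aux_compact_le hV h hK hKV)
      (aux_compact_le hV (fun f hf hfc hfs ↦ (h f hf hfc hfs).symm) hK hKV)
  have restr : ∀ ν : Measure X, ν Vᶜ = 0 → ∀ B : Set X, ν B = ν (B ∩ V) := by
    intro ν hν B
    refine le_antisymm ?_ (measure_mono inter_subset_left)
    calc ν B ≤ ν ((B ∩ V) ∪ Vᶜ) := by
          refine measure_mono fun x hx ↦ ?_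
          by_cases hxV : x ∈ V
          · exact Or.inl ⟨hx, hxV⟩
          · exact Or.inr hxV
      _ ≤ ν (B ∩ V) + ν Vᶜ := measure_union_le _ _
      _ = ν (B ∩ V) := by rw [hν, add_zero]
  refine Measure.ext fun B hB ↦ ?_
  rw [restr ρ hρ B, restr κ hκ B,
    (hB.inter hV.measurableSet).measure_eq_iSup_isCompact ρ,
    (hB.inter hV.measurableSet).measure_eq_iSup_isCompact κ]
  refine le_antisymm ?_ ?_
  · refine iSup₂_le fun K hKB ↦ iSup_le fun hK ↦ ?_
    rw [key K hK (hKB.trans inter_subset_right)]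
    exact le_iSup₂_of_le K hKB (le_iSup_of_le hK le_rfl)
  · refine iSup₂_le fun K hKB ↦ iSup_le fun hK ↦ ?_
    rw [← key K hK (hKB.trans inter_subset_right)]
    exact le_iSup₂_of_le K hKB (le_iSup_of_le hK le_rfl)

lemma aux_local {U : Set X} (hU : IsOpen U) {σ : X → X}
    (hfib : ∀ x : X, (σ ⁻¹' {x} ∩ U).Finite)
    {F : X → ℝ} (hF : ContinuousOn F U) {β : ℝ}
    {μ : Measure X} [IsFiniteMeasure μ]
    (hRuelle : ∀ f : X → ℝ, Continuous f → HasCompactSupport f → tsupport f ⊆ U →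
      ∫ x, (∑' y : ↥(σ ⁻¹' {x} ∩ U), Real.exp (-β * F y) * f y) ∂μ
        = ∫ x in U, f x ∂μ)
    (e : OpenPartialHomeomorph X X) (hσe : σ = e)
    {V : Set X} (hVo : IsOpen V) (hVs : V ⊆ e.source) (hVU : V ⊆ U)
    (hVc : IsCompact (closure V)) (hVcU : closure V ⊆ U) :
    ∀ A : Set X, A ⊆ V → MeasurableSet A →
      MeasurableSet (σ '' A) ∧
        μ (σ '' A) = ∫⁻ x in A, ENNReal.ofReal (Real.exp (β * F x)) ∂μ := by
  -- the image of `V`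
  set W : Set X := σ '' V with hW
  have hWo : IsOpen W := by
    rw [hW, hσe]; exact e.isOpen_image_of_subset_source hVo hVs
  have hWt : W ⊆ e.target := by
    rw [hW, hσe]
    exact (image_mono hVs).trans (by rw [e.image_source_eq_target])
  have hsymmV : ∀ x ∈ W, e.symm x ∈ V ∧ σ (e.symm x) = x := by
    rintro x ⟨y, hyV, rfl⟩
    have : e.symm (σ y) = y := by rw [hσe]; exact e.left_inv (hVs hyV)
    rw [this]
    exact ⟨hyV, rfl⟩
  -- images of measurable subsets of `V`
  have himg : ∀ A : Set X, A ⊆ V → σ '' A = W ∩ e.symm ⁻¹' A := by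
    intro A hAV
    ext x
    constructor
    · rintro ⟨y, hyA, rfl⟩
      have hyV := hAV hyA
      refine ⟨⟨y, hyV, rfl⟩, ?_⟩
      have : e.symm (σ y) = y := by rw [hσe]; exact e.left_inv (hVs hyV)
      simpa [this] using hyA
    · rintro ⟨hxW, hxA⟩
      exact ⟨e.symm x, hxA, (hsymmV x hxW).2⟩
  have hsymm_cont : ContinuousOn e.symm W := e.continuousOn_symm.mono hWt
  have hsymm_meas : AEMeasurable e.symm (μ.restrict W) :=
    hsymm_cont.aemeasurable hWo.measurableSet
  have himg_meas : ∀ A : Set X, A ⊆ V → MeasurableSet A → MeasurableSet (σ '' A) := by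
    intro A hAV hA
    rw [himg A hAV]
    have hres : Measurable (W.restrict e.symm) :=
      (hsymm_cont.restrict).measurable
    have : W ∩ e.symm ⁻¹' A = Subtype.val '' (W.restrict e.symm ⁻¹' A) := by
      ext x
      simp only [mem_inter_iff, mem_preimage, Set.restrict_apply, Set.mem_image]
      constructor
      · rintro ⟨hxW, hxA⟩; exact ⟨⟨x, hxW⟩, hxA, rfl⟩
      · rintro ⟨⟨y, hyW⟩, hyA, rfl⟩; exact ⟨hyW, hyA⟩
    rw [this]
    exact MeasurableSet.subtype_image hWo.measurableSet (hres hA)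
  -- the density
  set φ : X → ℝ≥0 := fun x ↦ (Real.exp (β * F x)).toNNReal with hφ
  have hφV : ContinuousOn φ V := by
    refine continuous_real_toNNReal.comp_continuousOn ?_
    exact (Real.continuous_exp.comp_continuousOn ((continuous_const.continuousOn).mul
      (hF.mono hVU)))
  have hφmeas : AEMeasurable (fun x ↦ (φ x : ℝ≥0∞)) (μ.restrict V) :=
    (ENNReal.continuous_coe.comp_continuousOn hφV).aemeasurable hVo.measurableSet
  set κ : Measure X := (μ.restrict V).withDensity (fun x ↦ (φ x : ℝ≥0∞)) with hκdef
  set ρ : Measure X := (μ.restrict W).map e.symm with hρdef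
  -- finiteness
  obtain ⟨C, hC⟩ : ∃ C : ℝ, ∀ x ∈ closure V, ‖Real.exp (β * F x)‖ ≤ C :=
    hVc.exists_bound_of_continuousOn
      (Real.continuous_exp.comp_continuousOn
        ((continuous_const.continuousOn).mul (hF.mono hVcU)))
  have hκfin : IsFiniteMeasure κ := by
    constructor
    rw [hκdef, withDensity_apply _ MeasurableSet.univ, Measure.restrict_univ]
    calc ∫⁻ x, (φ x : ℝ≥0∞) ∂(μ.restrict V)
        ≤ ∫⁻ _, ENNReal.ofReal C ∂(μ.restrict V) := by
          refine lintegral_mono_ae ?_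
          filter_upwards [ae_restrict_mem hVo.measurableSet] with x hx
          have := hC x (subset_closure hx)
          rw [Real.norm_eq_abs, abs_of_pos (Real.exp_pos _)] at this
          simp only [hφ]
          rw [← ENNReal.ofReal, ENNReal.ofReal_le_ofReal_iff (le_trans (norm_nonneg _) (hC x (subset_closure hx)))]
          exact this
      _ < ⊤ := by
          rw [lintegral_const]
          exact ENNReal.mul_lt_top ENNReal.ofReal_lt_top (measure_lt_top _ _)
  have hρfin : IsFiniteMeasure ρ := by
    constructor
    rw [hρdef, Measure.map_apply_of_aemeasurable hsymm_meas MeasurableSet.univ]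
    exact (measure_mono (subset_univ _)).trans_lt (measure_lt_top _ _)
  have hρV : ρ Vᶜ = 0 := by
    rw [hρdef, Measure.map_apply_of_aemeasurable hsymm_meas hVo.measurableSet.compl,
      Measure.restrict_apply' hWo.measurableSet]
    have : e.symm ⁻¹' Vᶜ ∩ W = ∅ := by
      ext x
      simp only [mem_inter_iff, mem_preimage, mem_compl_iff, mem_empty_iff_false, iff_false,
        not_and]
      intro hnV hxW
      exact hnV (hsymmV x hxW).1
    rw [this, measure_empty]
  have hκV : κ Vᶜ = 0 := by
    rw [hκdef, withDensity_apply _ hVo.measurableSet.compl,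
      Measure.restrict_restrict hVo.measurableSet.compl, compl_inter_self,
      Measure.restrict_empty, lintegral_zero_measure]
  haveI := hκfin
  haveI := hρfin
  -- the main identity on compactly supported functions
  have hmain : ρ = κ := by
    refine aux_measure_ext hVo hρV hκV ?_
    intro h hc hch hts
    set f : X → ℝ := fun x ↦ h x * Real.exp (β * F x) with hfdef
    have hsupp_f : Function.support f ⊆ Function.support h := by
      intro x hx
      simp only [hfdef, Function.mem_support] at hx ⊢
      intro h0
      exact hx (by rw [h0, zero_mul])
    have htsf : tsupport f ⊆ tsupport h := closure_mono hsupp_f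
    have htsfV : tsupport f ⊆ V := htsf.trans hts
    have hfcont : Continuous f := by
      rw [continuous_iff_continuousAt]
      intro x
      by_cases hx : x ∈ U
      · exact (hc.continuousAt).mul
          ((Real.continuous_exp.continuousAt).comp
            (continuousAt_const.mul (hF.continuousAt (hU.mem_nhds hx))))
      · have hx' : x ∈ (tsupport h)ᶜ := fun hcontra ↦ hx (hVU (hts hcontra))
        have hev : f =ᶠ[nhds x] fun _ ↦ (0 : ℝ) := by
          filter_upwards [(isClosed_tsupport h).isOpen_compl.mem_nhds hx'] with y hy
          simp [hfdef, image_eq_zero_of_notMem_tsupport hy]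
        exact (continuousAt_const (y := (0:ℝ))).congr hev.symm
    have hfc : HasCompactSupport f := hch.mono hsupp_f
    have hTS : ∀ x, (∑' y : ↥(σ ⁻¹' {x} ∩ U), Real.exp (-β * F y) * f y)
        = W.indicator (fun z ↦ h (e.symm z)) x := by
      intro x
      have hterm : ∀ y : ↥(σ ⁻¹' {x} ∩ U), Real.exp (-β * F (y : X)) * f y = h y := by
        intro y
        simp only [hfdef]
        rw [show (-β * F (y : X)) = -(β * F (y : X)) by ring, Real.exp_neg]
        field_simp
      rw [tsum_congr hterm]
      by_cases hxW : x ∈ W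
      · obtain ⟨hsyV, hsyσ⟩ := hsymmV x hxW
        have hmem : e.symm x ∈ σ ⁻¹' {x} ∩ U := ⟨by simp [hsyσ], hVU hsyV⟩
        rw [indicator_of_mem hxW]
        refine tsum_eq_single (⟨e.symm x, hmem⟩ : ↥(σ ⁻¹' {x} ∩ U)) ?_
        rintro ⟨y, hyσx, hyU⟩ hne
        by_contra hy0
        have hyV : y ∈ V := hts (subset_closure (by
          simpa [Function.mem_support] using hy0))
        have hyx : σ y = x := by simpa using hyσx
        have : y = e.symm x := by
          refine e.injOn (hVs hyV) (hVs hsyV) ?_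
          rw [← hσe] at *
          rw [hyx, hsyσ]
        exact hne (Subtype.ext this)
      · rw [indicator_of_notMem hxW]
        have : ∀ y : ↥(σ ⁻¹' {x} ∩ U), h (y : X) = 0 := by
          rintro ⟨y, hyσx, hyU⟩
          by_contra hy0
          have hyV : y ∈ V := hts (subset_closure (by
            simpa [Function.mem_support] using hy0))
          exact hxW ⟨y, hyV, by simpa using hyσx⟩
        rw [tsum_congr this, tsum_zero]
    have hid := hRuelle f hfcont hfc (htsfV.trans hVU)
    have hL : ∫ x, (∑' y : ↥(σ ⁻¹' {x} ∩ U), Real.exp (-β * F (y : X)) * f y) ∂μ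
        = ∫ x, h x ∂ρ := by
      rw [integral_congr_ae (Filter.Eventually.of_forall hTS),
        integral_indicator hWo.measurableSet, hρdef,
        integral_map hsymm_meas hc.aestronglyMeasurable]
    have hR : ∫ x in U, f x ∂μ = ∫ x, h x ∂κ := by
      have h1 : U.indicator f = V.indicator f := by
        funext x
        by_cases hxV : x ∈ V
        · rw [indicator_of_mem hxV, indicator_of_mem (hVU hxV)]
        · rw [indicator_of_notMem hxV]
          by_cases hxU : x ∈ U
          · rw [indicator_of_mem hxU]
            exact image_eq_zero_of_notMem_tsupport (fun hcontra ↦ hxV (htsfV hcontra))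
          · rw [indicator_of_notMem hxU]
      rw [← integral_indicator hU.measurableSet, h1, integral_indicator hVo.measurableSet,
        hκdef, integral_withDensity_eq_integral_smul₀ (hφV.aemeasurable hVo.measurableSet) h]
      refine integral_congr_ae (Filter.Eventually.of_forall fun x ↦ ?_)
      have : ((φ x : ℝ)) = Real.exp (β * F x) :=
        Real.coe_toNNReal _ (Real.exp_pos _).le
      simp only [hfdef, NNReal.smul_def, smul_eq_mul, this]
      ring
    rw [hL, hR] at hid
    exact hid
  -- conclusion
  intro A hAV hA
  refine ⟨himg_meas A hAV hA, ?_⟩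
  have h1 : μ (σ '' A) = ρ A := by
    rw [hρdef, Measure.map_apply_of_aemeasurable hsymm_meas hA,
      Measure.restrict_apply' hWo.measurableSet, himg A hAV, inter_comm]
  have h2 : κ A = ∫⁻ x in A, ENNReal.ofReal (Real.exp (β * F x)) ∂μ := by
    rw [hκdef, withDensity_apply _ hA, Measure.restrict_restrict hA,
      inter_eq_self_of_subset_left hAV]
    refine lintegral_congr fun x ↦ ?_
    simp [hφ, ENNReal.ofReal]
  rw [h1, hmain, h2]

end Aux

open MeasureTheory Set


/-- If a finite Borel measure `μ` is an eigenmeasure for the Ruelle transformation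
`L_{-βF}`, i.e. `∫_X ∑_{σ(y)=x, y ∈ U} e^{-βF(y)} f(y) dμ(x) = ∫_U f dμ` for all
continuous compactly supported `f` with support in `U`, then `μ` is Denker–Urbański
conformal: `μ(σ(A)) = ∫⁻_A e^{βF} dμ` for every Borel `A ⊆ U` on which `σ` is
injective. -/
theorem stmt7 {X : Type*} [TopologicalSpace X] [LocallyCompactSpace X] [T2Space X]
    [SecondCountableTopology X] [MeasurableSpace X] [BorelSpace X]
    (U : Set X) (hU : IsOpen U) (σ : X → X) (hσ : IsLocalHomeomorphOn σ U)
    (hfib : ∀ x : X, (σ ⁻¹' {x} ∩ U).Finite)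
    (F : X → ℝ) (hF : ContinuousOn F U) (β : ℝ) (hβ : 0 < β)
    (μ : Measure X) (hfin : IsFiniteMeasure μ)
    (hRuelle : ∀ f : X → ℝ, Continuous f → HasCompactSupport f → tsupport f ⊆ U →
      ∫ x, (∑' y : ↥(σ ⁻¹' {x} ∩ U), Real.exp (-β * F y) * f y) ∂μ
        = ∫ x in U, f x ∂μ) :
    ∀ A : Set X, A ⊆ U → MeasurableSet A → Set.InjOn σ A →
      μ (σ '' A) = ∫⁻ x in A, ENNReal.ofReal (Real.exp (β * F x)) ∂μ := by
  haveI := hfin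
  intro A hAU hA hInj
  -- for each point of `U`, a good neighbourhood on which the local result holds
  have hloc : ∀ x : ↥U, ∃ V : Set X, IsOpen V ∧ (x : X) ∈ V ∧
      ∀ B : Set X, B ⊆ V → MeasurableSet B →
        MeasurableSet (σ '' B) ∧
          μ (σ '' B) = ∫⁻ z in B, ENNReal.ofReal (Real.exp (β * F z)) ∂μ := by
    rintro ⟨x, hx⟩
    obtain ⟨e, hxe, hσe⟩ := hσ x hx
    obtain ⟨K, hK, hxK, hKO⟩ := exists_compact_subset (e.open_source.inter hU) ⟨hxe, hx⟩
    have hclo : closure (interior K) ⊆ K := closure_minimal interior_subset hK.isClosed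
    refine ⟨interior K, isOpen_interior, hxK, ?_⟩
    exact aux_local hU hfib hF hRuelle e hσe isOpen_interior
      ((interior_subset.trans hKO).trans inter_subset_left)
      ((interior_subset.trans hKO).trans inter_subset_right)
      (hK.of_isClosed_subset isClosed_closure hclo)
      (hclo.trans (hKO.trans inter_subset_right))
  choose V hVo hVmem hVP using hloc
  obtain ⟨T, hTc, hTU⟩ := TopologicalSpace.isOpen_iUnion_countable V hVo
  have hUcov : U ⊆ ⋃ i, V i := fun x hx ↦ mem_iUnion.mpr ⟨⟨x, hx⟩, hVmem ⟨x, hx⟩⟩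
  rcases T.eq_empty_or_nonempty with hTe | hTne
  · have : U ⊆ (∅ : Set X) := by
      rw [← hTU] at hUcov
      simpa [hTe] using hUcov
    have hAe : A = ∅ := subset_empty_iff.mp (hAU.trans this)
    simp [hAe]
  · obtain ⟨g, hg⟩ := hTc.exists_eq_range hTne
    set Vn : ℕ → Set X := fun n ↦ V (g n) with hVn
    have hUcov' : U ⊆ ⋃ n, Vn n := by
      intro x hx
      have := hUcov hx
      rw [← hTU, hg] at this
      simpa [Vn] using this
    set B : ℕ → Set X := disjointed (fun n ↦ A ∩ Vn n) with hB
    have hBsub : ∀ n, B n ⊆ A ∩ Vn n := fun n ↦ disjointed_subset _ n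
    have hBmeas : ∀ n, MeasurableSet (B n) :=
      MeasurableSet.disjointed fun n ↦ hA.inter (hVo (g n)).measurableSet
    have hBdisj : Pairwise (Function.onFun Disjoint B) := disjoint_disjointed _
    have hBUnion : ⋃ n, B n = A := by
      rw [hB, iUnion_disjointed, ← inter_iUnion]
      exact inter_eq_self_of_subset_left (hAU.trans hUcov')
    have hBimg : ∀ n, MeasurableSet (σ '' B n) ∧
        μ (σ '' B n) = ∫⁻ z in B n, ENNReal.ofReal (Real.exp (β * F z)) ∂μ :=
      fun n ↦ hVP (g n) (B n) ((hBsub n).trans inter_subset_right) (hBmeas n)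
    have himgdisj : Pairwise (Function.onFun Disjoint fun n ↦ σ '' B n) := by
      intro m n hmn
      refine Set.disjoint_left.mpr ?_
      rintro x ⟨a, haB, rfl⟩ ⟨b, hbB, hab⟩
      have haA : a ∈ A := ((hBsub m) haB).1
      have hbA : b ∈ A := ((hBsub n) hbB).1
      have : b = a := hInj hbA haA hab
      subst this
      exact Set.disjoint_left.mp (hBdisj hmn) haB hbB
    calc μ (σ '' A) = μ (⋃ n, σ '' B n) := by rw [← image_iUnion, hBUnion]
      _ = ∑' n, μ (σ '' B n) := measure_iUnion himgdisj fun n ↦ (hBimg n).1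
      _ = ∑' n, ∫⁻ z in B n, ENNReal.ofReal (Real.exp (β * F z)) ∂μ := by
          exact tsum_congr fun n ↦ (hBimg n).2
      _ = ∫⁻ z in ⋃ n, B n, ENNReal.ofReal (Real.exp (β * F z)) ∂μ :=
          (lintegral_iUnion hBmeas hBdisj _).symm
      _ = ∫⁻ z in A, ENNReal.ofReal (Real.exp (β * F z)) ∂μ := by rw [hBUnion]
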